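/- There exists a Hopf algebra structure over k on the algebra B (extending its given k-algebra structure) whose comultiplication Δ, counit ε, and antipode S satisfy, on the generators: Δ(K) = K ⊗ K and Δ(d_k) = d_k ⊗ 1 + K^{n_k} ⊗ d_k for all 1 ≤ k ≤ t; ε(K) = 1 and ε(d_k) = 0 for all k; S(K) = K^{N−1} and S(d_k) = −K^{N−n_k}·d_k for all k. -/

import Mathlib

/-- The defining relations of the bosonization `B = H_n ⋊ k[C_N]`: generators
`K = ι none` and `d_i = ι (some i)`, relations `K^N = 1`, `K d_i = ξ_i d_i K`,
`d_i ^ (p i) = 0` and `d_i d_j = d_j d_i`. -/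
inductive BosRel (k : Type*) [Field k] (t N : ℕ) (p : Fin t → ℕ) (ξ : Fin t → k) :
    FreeAlgebra k (Option (Fin t)) → FreeAlgebra k (Option (Fin t)) → Prop
  | K_pow : BosRel k t N p ξ (FreeAlgebra.ι k (none : Option (Fin t)) ^ N) 1
  | K_d (i : Fin t) : BosRel k t N p ξ
      (FreeAlgebra.ι k (none : Option (Fin t)) * FreeAlgebra.ι k (some i))
      (ξ i • (FreeAlgebra.ι k (some i) * FreeAlgebra.ι k (none : Option (Fin t))))
  | d_pow (i : Fin t) : BosRel k t N p ξ (FreeAlgebra.ι k (some i) ^ p i) 0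
  | d_comm (i j : Fin t) : i ≠ j → BosRel k t N p ξ
      (FreeAlgebra.ι k (some i) * FreeAlgebra.ι k (some j))
      (FreeAlgebra.ι k (some j) * FreeAlgebra.ι k (some i))

/-- The bosonization `B`, as the quotient of the free algebra on `K, d_1, …, d_t` by the
two-sided ideal generated by the relations `BosRel`. -/
abbrev BosAlg (k : Type*) [Field k] (t N : ℕ) (p : Fin t → ℕ) (ξ : Fin t → k) :=
  RingQuot (BosRel k t N p ξ)

/-- The class of the generator `K` in `B`. -/
noncomputable def KB (k : Type*) [Field k] (t N : ℕ) (p : Fin t → ℕ) (ξ : Fin t → k) :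
    BosAlg k t N p ξ :=
  RingQuot.mkAlgHom k (BosRel k t N p ξ) (FreeAlgebra.ι k none)

/-- The class of the generator `d i` in `B`. -/
noncomputable def dB (k : Type*) [Field k] (t N : ℕ) (p : Fin t → ℕ) (ξ : Fin t → k)
    (i : Fin t) : BosAlg k t N p ξ :=
  RingQuot.mkAlgHom k (BosRel k t N p ξ) (FreeAlgebra.ι k (some i))

open TensorProduct


namespace BosAux

variable {k : Type*} [CommRing k]

/-- Gaussian binomial coefficients via the Pascal recurrence. -/
def qb (ω : k) : ℕ → ℕ → k
  | _, 0 => 1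
  | 0, _ + 1 => 0
  | n + 1, j + 1 => ω ^ (n - j) * qb ω n j + qb ω n (j + 1)

@[simp] lemma qb_zero_right (ω : k) (n : ℕ) : qb ω n 0 = 1 := by cases n <;> rfl

lemma qb_succ_succ (ω : k) (n j : ℕ) :
    qb ω (n + 1) (j + 1) = ω ^ (n - j) * qb ω n j + qb ω n (j + 1) := rfl

lemma qb_eq_zero_of_lt (ω : k) : ∀ {n j : ℕ}, n < j → qb ω n j = 0 := by
  intro n
  induction n with
  | zero => intro j hj; obtain ⟨j, rfl⟩ := Nat.exists_eq_add_of_lt hj; rfl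
  | succ n ih =>
    intro j hj
    obtain ⟨j, rfl⟩ : ∃ j', j = j' + 1 := ⟨j - 1, by omega⟩
    rw [qb_succ_succ, ih (by omega), ih (by omega), mul_zero, zero_add]

@[simp] lemma qb_diag (ω : k) (n : ℕ) : qb ω n n = 1 := by
  induction n with
  | zero => rfl
  | succ n ih =>
    rw [qb_succ_succ, ih, qb_eq_zero_of_lt ω (by omega)]
    simp

lemma qb_pascal2 (ω : k) : ∀ n j : ℕ,
    qb ω (n + 1) (j + 1) = ω ^ (j + 1) * qb ω n (j + 1) + qb ω n j := by
  intro n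
  induction n with
  | zero =>
    intro j
    cases j with
    | zero => simp [qb]
    | succ j' =>
      rw [qb_succ_succ, qb_eq_zero_of_lt ω (show (0:ℕ) < j' + 1 by omega),
        qb_eq_zero_of_lt ω (show (0:ℕ) < j' + 2 by omega)]
      ring
  | succ n ih =>
    intro j
    cases j with
    | zero =>
      have h0 : qb ω (n + 2) 1 = ω ^ (n + 1) + qb ω (n + 1) 1 := by
        rw [qb_succ_succ]; simp
      have h1 : qb ω (n + 1) 1 = ω ^ n + qb ω n 1 := by
        rw [qb_succ_succ]; simp
      have h2 : qb ω (n + 1) 1 = ω ^ 1 * qb ω n 1 + 1 := by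
        have := ih 0; simpa using this
      have goal' : qb ω (n + 2) 1 = ω ^ 1 * qb ω (n + 1) 1 + 1 := by
        linear_combination h0 - ω * h1 + h2
      simpa using goal'
    | succ j' =>
      rcases Nat.lt_or_ge j' n with hj | hj
      · -- j' < n
        have e2 : qb ω (n + 1) (j' + 2) = ω ^ (j' + 2) * qb ω n (j' + 2) + qb ω n (j' + 1) :=
          ih (j' + 1)
        have e3 : qb ω (n + 1) (j' + 1) = ω ^ (j' + 1) * qb ω n (j' + 1) + qb ω n j' :=
          ih j'
        have e4 : qb ω (n + 1) (j' + 1) = ω ^ (n - j') * qb ω n j' + qb ω n (j' + 1) :=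
          qb_succ_succ ω n j'
        have e5 : qb ω (n + 1) (j' + 2) = ω ^ (n - (j' + 1)) * qb ω n (j' + 1) + qb ω n (j' + 2) :=
          qb_succ_succ ω n (j' + 1)
        have goal' : qb ω (n + 2) (j' + 2)
            = ω ^ (j' + 2) * qb ω (n + 1) (j' + 2) + qb ω (n + 1) (j' + 1) := by
          rw [qb_succ_succ ω (n + 1) (j' + 1), Nat.succ_sub_succ]
          rw [show qb ω (n + 1) (j' + 1 + 1) = qb ω (n + 1) (j' + 2) from rfl]
          generalize qb ω (n + 1) (j' + 1) = P at e3 e4 ⊢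
          generalize qb ω (n + 1) (j' + 2) = Q at e2 e5 ⊢
          generalize qb ω n j' = A at e3 e4
          generalize qb ω n (j' + 1) = B at e2 e3 e4 e5
          generalize qb ω n (j' + 2) = C at e2 e5
          have hc : n - j' = (n - (j' + 1)) + 1 := by omega
          rw [hc] at e4 ⊢
          linear_combination e2 + (ω ^ (n - (j' + 1)) * ω) * e3 - e4 - (ω ^ (j' + 1) * ω) * e5
        exact goal'
      · rcases Nat.eq_or_lt_of_le hj with heq | hj'
        · -- j' = n
          subst heq
          rw [show qb ω (n + 1) (n + 1 + 1) = 0 from qb_eq_zero_of_lt ω (by omega)]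
          simp
        · -- n < j'
          have h1 : qb ω (n + 2) (j' + 2) = 0 := qb_eq_zero_of_lt ω (by omega)
          have h2 : qb ω (n + 1) (j' + 2) = 0 := qb_eq_zero_of_lt ω (by omega)
          have h3 : qb ω (n + 1) (j' + 1) = 0 := qb_eq_zero_of_lt ω (by omega)
          rw [h1, h2, h3]
          ring

lemma qb_mul_identity (ω : k) : ∀ n j : ℕ,
    (ω ^ (j + 1) - 1) * qb ω (n + 1) (j + 1) = (ω ^ (n + 1) - 1) * qb ω n j := by
  intro n
  induction n with
  | zero =>
    intro j
    cases j with
    | zero => simp [qb]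
    | succ j' =>
      rw [qb_eq_zero_of_lt ω (show 1 < j' + 2 by omega),
        qb_eq_zero_of_lt ω (show 0 < j' + 1 by omega)]
      ring
  | succ n ih =>
    intro j
    cases j with
    | zero =>
      have h1 : qb ω (n + 2) 1 = ω ^ (n + 1) + qb ω (n + 1) 1 := by
        rw [qb_succ_succ]; simp
      have h2 : (ω ^ 1 - 1) * qb ω (n + 1) 1 = (ω ^ (n + 1) - 1) * 1 := by
        have := ih 0; simpa using this
      have goal' : (ω ^ 1 - 1) * qb ω (n + 2) 1 = (ω ^ (n + 2) - 1) * 1 := by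
        rw [h1]
        linear_combination h2
      simpa using goal'
    | succ j' =>
      have e2 : (ω ^ (j' + 2) - 1) * qb ω (n + 1) (j' + 2)
          = (ω ^ (n + 1) - 1) * qb ω n (j' + 1) := ih (j' + 1)
      have e3 : qb ω (n + 1) (j' + 1) = ω ^ (j' + 1) * qb ω n (j' + 1) + qb ω n j' :=
        qb_pascal2 ω n j'
      have e4 : qb ω (n + 1) (j' + 1) = ω ^ (n - j') * qb ω n j' + qb ω n (j' + 1) :=
        qb_succ_succ ω n j'
      rcases Nat.lt_or_ge n j' with hj | hj
      · have h1 : qb ω (n + 2) (j' + 2) = 0 := qb_eq_zero_of_lt ω (by omega)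
        have h2 : qb ω (n + 1) (j' + 1) = 0 := qb_eq_zero_of_lt ω (by omega)
        rw [h1, h2]
        ring
      · -- j' ≤ n
        have goal' : (ω ^ (j' + 2) - 1) * qb ω (n + 2) (j' + 2)
            = (ω ^ (n + 2) - 1) * qb ω (n + 1) (j' + 1) := by
          rw [qb_succ_succ ω (n + 1) (j' + 1), Nat.succ_sub_succ]
          rw [show qb ω (n + 1) (j' + 1 + 1) = qb ω (n + 1) (j' + 2) from rfl]
          generalize qb ω (n + 1) (j' + 1) = P at e3 e4 ⊢
          generalize qb ω (n + 1) (j' + 2) = Q at e2 ⊢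
          generalize qb ω n j' = A at e3 e4
          generalize qb ω n (j' + 1) = B at e2 e3 e4
          rw [show n + 2 = (n - j') + (j' + 2) from by omega, pow_add]
          rw [show n + 1 = (n - j') + (j' + 1) from by omega, pow_add] at e2
          linear_combination e2 - ω ^ (n - j') * e3 + e4
        exact goal'

lemma qb_prime_eq_zero {k : Type*} [Field k] (ω : k) {P : ℕ} (hP : 0 < P)
    (h1 : ω ^ P = 1) (h2 : ∀ j, 0 < j → j < P → ω ^ j ≠ 1) :
    ∀ j, 0 < j → j < P → qb ω P j = 0 := by
  intro j hj0 hjP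
  obtain ⟨j', rfl⟩ : ∃ j', j = j' + 1 := ⟨j - 1, by omega⟩
  obtain ⟨n, rfl⟩ : ∃ n, P = n + 1 := ⟨P - 1, by omega⟩
  have key := qb_mul_identity ω n j'
  rw [h1, sub_self, zero_mul] at key
  have hne : ω ^ (j' + 1) - 1 ≠ 0 := sub_ne_zero.mpr (h2 _ (by omega) (by omega))
  exact (mul_eq_zero.mp key).resolve_left hne

end BosAux

namespace BosAux

section QAddPow

variable {k : Type*} [CommRing k] {R : Type*} [Ring R] [Algebra k R]

lemma pow_mul_of_qcomm {ω : k} {x y : R} (h : y * x = ω • (x * y)) :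
    ∀ s : ℕ, y ^ s * x = (ω ^ s) • (x * y ^ s) := by
  intro s
  induction s with
  | zero => simp
  | succ s ih =>
    rw [pow_succ', mul_assoc, ih, mul_smul_comm, ← mul_assoc, h, smul_mul_assoc, smul_smul,
      mul_assoc x y (y ^ s), ← pow_succ', ← pow_succ]

lemma add_pow_of_qcomm {ω : k} {x y : R} (h : y * x = ω • (x * y)) (n : ℕ) :
    (x + y) ^ n = ∑ j ∈ Finset.range (n + 1), qb ω n j • (x ^ j * y ^ (n - j)) := by
  induction n with
  | zero => simp
  | succ n ih =>
    have key : ∀ j, j ≤ n → (x ^ j * y ^ (n - j)) * (x + y)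
        = ω ^ (n - j) • (x ^ (j + 1) * y ^ (n - j)) + x ^ j * y ^ (n + 1 - j) := by
      intro j hj
      rw [mul_add]
      congr 1
      · rw [mul_assoc, pow_mul_of_qcomm h (n - j), mul_smul_comm, ← mul_assoc, ← pow_succ]
      · rw [mul_assoc, ← pow_succ, show n - j + 1 = n + 1 - j from by omega]
    calc (x + y) ^ (n + 1)
        = (∑ j ∈ Finset.range (n + 1), qb ω n j • (x ^ j * y ^ (n - j))) * (x + y) := by
          rw [pow_succ, ih]
      _ = ∑ j ∈ Finset.range (n + 1),
            ((ω ^ (n - j) * qb ω n j) • (x ^ (j + 1) * y ^ (n - j))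
              + qb ω n j • (x ^ j * y ^ (n + 1 - j))) := by
          rw [Finset.sum_mul]
          refine Finset.sum_congr rfl fun j hj => ?_
          have hj' : j ≤ n := by
            have := Finset.mem_range.mp hj; omega
          rw [smul_mul_assoc, key j hj', smul_add, smul_smul, mul_comm (qb ω n j) (ω ^ (n - j))]
      _ = (∑ j ∈ Finset.range (n + 1), (ω ^ (n - j) * qb ω n j) • (x ^ (j + 1) * y ^ (n - j)))
            + ∑ j ∈ Finset.range (n + 1), qb ω n j • (x ^ j * y ^ (n + 1 - j)) :=
          Finset.sum_add_distrib
      _ = ∑ j ∈ Finset.range (n + 1 + 1), qb ω (n + 1) j • (x ^ j * y ^ (n + 1 - j)) := by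
          rw [Finset.sum_range_succ' (fun j => qb ω (n + 1) j • (x ^ j * y ^ (n + 1 - j))) (n + 1)]
          simp only [qb_succ_succ, Nat.succ_sub_succ, qb_zero_right, pow_zero, one_mul, one_smul,
            Nat.sub_zero]
          have split : ∑ i ∈ Finset.range (n + 1),
              (ω ^ (n - i) * qb ω n i + qb ω n (i + 1)) • (x ^ (i + 1) * y ^ (n - i))
              = (∑ i ∈ Finset.range (n + 1), (ω ^ (n - i) * qb ω n i) • (x ^ (i + 1) * y ^ (n - i)))
                + ∑ i ∈ Finset.range (n + 1), qb ω n (i + 1) • (x ^ (i + 1) * y ^ (n - i)) := by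
            rw [← Finset.sum_add_distrib]
            exact Finset.sum_congr rfl fun i _ => add_smul _ _ _
          rw [split]
          have second : ∑ j ∈ Finset.range (n + 1), qb ω n j • (x ^ j * y ^ (n + 1 - j))
              = (∑ i ∈ Finset.range (n + 1), qb ω n (i + 1) • (x ^ (i + 1) * y ^ (n - i)))
                + y ^ (n + 1) := by
            rw [Finset.sum_range_succ' (fun j => qb ω n j • (x ^ j * y ^ (n + 1 - j))) n]
            rw [Finset.sum_range_succ (fun i => qb ω n (i + 1) • (x ^ (i + 1) * y ^ (n - i))) n]
            simp only [Nat.succ_sub_succ, qb_zero_right, pow_zero, one_mul, one_smul,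
              Nat.sub_zero, qb_eq_zero_of_lt ω (Nat.lt_succ_self n), zero_smul, add_zero]
          rw [second]
          abel
    

lemma add_pow_eq_zero_of_qcomm {k : Type*} [Field k] {R : Type*} [Ring R] [Algebra k R]
    {ω : k} {x y : R} (h : y * x = ω • (x * y)) {P : ℕ} (hP : 0 < P)
    (h1 : ω ^ P = 1) (h2 : ∀ j, 0 < j → j < P → ω ^ j ≠ 1)
    (hx : x ^ P = 0) (hy : y ^ P = 0) : (x + y) ^ P = 0 := by
  rw [add_pow_of_qcomm h P]
  apply Finset.sum_eq_zero
  intro j hj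
  have hj' : j ≤ P := by have := Finset.mem_range.mp hj; omega
  rcases Nat.eq_zero_or_pos j with rfl | hj0
  · simp [hy]
  rcases Nat.eq_or_lt_of_le hj' with rfl | hjP
  · simp [hx]
  · rw [qb_prime_eq_zero ω hP h1 h2 j hj0 hjP, zero_smul]

end QAddPow

end BosAux
section BosBasic

variable {k : Type*} [Field k] {t N : ℕ} {p : Fin t → ℕ} {ξ : Fin t → k}

namespace BosAux

lemma KB_pow_N : KB k t N p ξ ^ N = 1 := by
  rw [KB, ← map_pow, RingQuot.mkAlgHom_rel k BosRel.K_pow, map_one]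

lemma KB_mul_dB (i : Fin t) :
    KB k t N p ξ * dB k t N p ξ i = ξ i • (dB k t N p ξ i * KB k t N p ξ) := by
  rw [KB, dB, ← map_mul, RingQuot.mkAlgHom_rel k (BosRel.K_d i), map_smul, map_mul]

lemma dB_pow_p (i : Fin t) : dB k t N p ξ i ^ p i = 0 := by
  rw [dB, ← map_pow, RingQuot.mkAlgHom_rel k (BosRel.d_pow i), map_zero]

lemma dB_comm {i j : Fin t} (h : i ≠ j) :
    dB k t N p ξ i * dB k t N p ξ j = dB k t N p ξ j * dB k t N p ξ i := by
  simp only [dB]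
  rw [← map_mul, RingQuot.mkAlgHom_rel k (BosRel.d_comm i j h), map_mul]

lemma KB_pow_mul_dB (a : ℕ) (i : Fin t) :
    KB k t N p ξ ^ a * dB k t N p ξ i = (ξ i ^ a) • (dB k t N p ξ i * KB k t N p ξ ^ a) :=
  pow_mul_of_qcomm (KB_mul_dB i) a

lemma KB_pow_mul_dB_comm {a : ℕ} {i : Fin t} (hc : ξ i ^ a = 1) :
    KB k t N p ξ ^ a * dB k t N p ξ i = dB k t N p ξ i * KB k t N p ξ ^ a := by
  rw [KB_pow_mul_dB, hc, one_smul]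

lemma dB_mul_KB_pow {a : ℕ} (i : Fin t) (hξN : ξ i ^ N = 1) (h : a ≤ N) :
    dB k t N p ξ i * KB k t N p ξ ^ a = (ξ i ^ (N - a)) • (KB k t N p ξ ^ a * dB k t N p ξ i) := by
  rw [KB_pow_mul_dB, smul_smul, ← pow_add, show N - a + a = N from by omega, hξN, one_smul]

lemma KB_pow_mod (a : ℕ) : KB k t N p ξ ^ a = KB k t N p ξ ^ (a % N) := by
  conv_lhs => rw [← Nat.div_add_mod a N]
  rw [pow_add, pow_mul, KB_pow_N, one_pow, one_mul]

lemma dB_mul_KB_pow_pow (a s : ℕ) (i : Fin t) :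
    ∃ c : k, (dB k t N p ξ i * KB k t N p ξ ^ a) ^ s
      = c • (dB k t N p ξ i ^ s * KB k t N p ξ ^ (a * s)) := by
  induction s with
  | zero => exact ⟨1, by simp⟩
  | succ s ih =>
    obtain ⟨c, hc⟩ := ih
    refine ⟨c * ξ i ^ (a * s), ?_⟩
    rw [pow_succ, hc, smul_mul_assoc, mul_assoc, ← mul_assoc (KB k t N p ξ ^ (a * s)),
      KB_pow_mul_dB, smul_mul_assoc, mul_smul_comm, smul_smul]
    congr 1
    rw [mul_assoc, ← pow_add, ← mul_assoc, ← pow_succ, Nat.mul_succ]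

lemma dB_mul_KB_pow_pow_p (a : ℕ) (i : Fin t) :
    (dB k t N p ξ i * KB k t N p ξ ^ a) ^ p i = 0 := by
  obtain ⟨c, hc⟩ := dB_mul_KB_pow_pow (k := k) (t := t) (N := N) (p := p) (ξ := ξ) a (p i) i
  rw [hc, dB_pow_p, zero_mul, smul_zero]

lemma KB_pow_mul_dB_pow_p (a : ℕ) (i : Fin t) :
    (KB k t N p ξ ^ a * dB k t N p ξ i) ^ p i = 0 := by
  rw [KB_pow_mul_dB]
  obtain ⟨c, hc⟩ := dB_mul_KB_pow_pow (k := k) (t := t) (N := N) (p := p) (ξ := ξ) a (p i) i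
  rw [smul_pow, hc, dB_pow_p, zero_mul, smul_zero, smul_zero]

lemma bneg_mul (x y : BosAlg k t N p ξ) : -x * y = -(x * y) := neg_mul x y

lemma bmul_neg (x y : BosAlg k t N p ξ) : x * -y = -(x * y) := mul_neg x y

lemma bneg_mul_neg (x y : BosAlg k t N p ξ) : -x * -y = x * y := neg_mul_neg x y

lemma bsmul_neg (c : k) (x : BosAlg k t N p ξ) : c • (-x) = -(c • x) := smul_neg c x

lemma bneg_pow (x : BosAlg k t N p ξ) (n : ℕ) : (-x) ^ n = (-1) ^ n * x ^ n := neg_pow x n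

end BosAux

end BosBasic
namespace BosAux

/-- The numerical hypotheses needed to construct the Hopf structure. -/
structure BosHyp (k : Type*) [Field k] (t N : ℕ) (p : Fin t → ℕ) (ξ : Fin t → k)
    (nn : Fin t → ℕ) : Prop where
  hN : 0 < N
  hnn_pos : ∀ i, 0 < nn i
  hnn_le : ∀ i, nn i ≤ N
  hp_pos : ∀ i, 0 < p i
  hξN : ∀ i, ξ i ^ N = 1
  hω_pow : ∀ i, (ξ i ^ nn i) ^ p i = 1
  hω_ne : ∀ i j, 0 < j → j < p i → (ξ i ^ nn i) ^ j ≠ 1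
  hcross : ∀ i j, i ≠ j → ξ i ^ nn j = 1

section Maps

variable {k : Type*} [Field k] {t N : ℕ} {p : Fin t → ℕ} {ξ : Fin t → k} {nn : Fin t → ℕ}

open Algebra.TensorProduct MulOpposite

/-- generators for the comultiplication -/
noncomputable def Δgen (k : Type*) [Field k] (t N : ℕ) (p : Fin t → ℕ) (ξ : Fin t → k)
    (nn : Fin t → ℕ) : Option (Fin t) → BosAlg k t N p ξ ⊗[k] BosAlg k t N p ξ
  | none => KB k t N p ξ ⊗ₜ KB k t N p ξ
  | some i => dB k t N p ξ i ⊗ₜ 1 + (KB k t N p ξ ^ nn i) ⊗ₜ dB k t N p ξ i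

lemma Δrel (h : BosHyp k t N p ξ nn) : ∀ ⦃x y : FreeAlgebra k (Option (Fin t))⦄,
    BosRel k t N p ξ x y →
    FreeAlgebra.lift k (Δgen k t N p ξ nn) x = FreeAlgebra.lift k (Δgen k t N p ξ nn) y := by
  intro x y hxy
  induction hxy with
  | K_pow =>
    simp only [map_pow, map_one, FreeAlgebra.lift_ι_apply]
    show (KB k t N p ξ ⊗ₜ[k] KB k t N p ξ) ^ N = 1
    rw [Algebra.TensorProduct.tmul_pow, KB_pow_N, Algebra.TensorProduct.one_def]
  | K_d i =>
    simp only [map_mul, map_smul, FreeAlgebra.lift_ι_apply]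
    show (KB k t N p ξ ⊗ₜ[k] KB k t N p ξ) *
        (dB k t N p ξ i ⊗ₜ 1 + (KB k t N p ξ ^ nn i) ⊗ₜ dB k t N p ξ i)
      = ξ i • ((dB k t N p ξ i ⊗ₜ 1 + (KB k t N p ξ ^ nn i) ⊗ₜ dB k t N p ξ i) *
          (KB k t N p ξ ⊗ₜ[k] KB k t N p ξ))
    have hKcomm : KB k t N p ξ * KB k t N p ξ ^ nn i
        = KB k t N p ξ ^ nn i * KB k t N p ξ :=
      ((Commute.refl (KB k t N p ξ)).pow_right (nn i)).eq
    simp only [mul_add, add_mul, Algebra.TensorProduct.tmul_mul_tmul, one_mul, mul_one,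
      smul_add]
    rw [KB_mul_dB i, hKcomm, TensorProduct.smul_tmul', TensorProduct.tmul_smul]
  | d_pow i =>
    simp only [map_pow, map_zero, FreeAlgebra.lift_ι_apply]
    show (dB k t N p ξ i ⊗ₜ[k] 1 + (KB k t N p ξ ^ nn i) ⊗ₜ dB k t N p ξ i) ^ p i = 0
    refine add_pow_eq_zero_of_qcomm (R := BosAlg k t N p ξ ⊗[k] BosAlg k t N p ξ)
      (x := dB k t N p ξ i ⊗ₜ 1) (y := (KB k t N p ξ ^ nn i) ⊗ₜ dB k t N p ξ i)
      (ω := ξ i ^ nn i) ?_ (h.hp_pos i) (h.hω_pow i) (h.hω_ne i) ?_ ?_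
    · rw [Algebra.TensorProduct.tmul_mul_tmul, Algebra.TensorProduct.tmul_mul_tmul,
        KB_pow_mul_dB, mul_one, one_mul, TensorProduct.smul_tmul']
    · rw [Algebra.TensorProduct.tmul_pow, dB_pow_p, zero_tmul]
    · rw [Algebra.TensorProduct.tmul_pow, dB_pow_p, tmul_zero]
  | d_comm i j hij =>
    simp only [map_mul, FreeAlgebra.lift_ι_apply]
    show (dB k t N p ξ i ⊗ₜ[k] 1 + (KB k t N p ξ ^ nn i) ⊗ₜ dB k t N p ξ i) *
        (dB k t N p ξ j ⊗ₜ 1 + (KB k t N p ξ ^ nn j) ⊗ₜ dB k t N p ξ j)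
      = (dB k t N p ξ j ⊗ₜ 1 + (KB k t N p ξ ^ nn j) ⊗ₜ dB k t N p ξ j) *
        (dB k t N p ξ i ⊗ₜ 1 + (KB k t N p ξ ^ nn i) ⊗ₜ dB k t N p ξ i)
    simp only [mul_add, add_mul, Algebra.TensorProduct.tmul_mul_tmul, one_mul, mul_one]
    rw [dB_comm hij, KB_pow_mul_dB_comm (h.hcross j i (Ne.symm hij)),
      KB_pow_mul_dB_comm (h.hcross i j hij), ← pow_add, ← pow_add, Nat.add_comm (nn i) (nn j)]
    abel

/-- The comultiplication. -/
noncomputable def Δmap (h : BosHyp k t N p ξ nn) :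
    BosAlg k t N p ξ →ₐ[k] BosAlg k t N p ξ ⊗[k] BosAlg k t N p ξ :=
  RingQuot.liftAlgHom k ⟨FreeAlgebra.lift k (Δgen k t N p ξ nn), Δrel h⟩

lemma Δmap_K (h : BosHyp k t N p ξ nn) :
    Δmap h (KB k t N p ξ) = KB k t N p ξ ⊗ₜ KB k t N p ξ := by
  rw [Δmap, KB, RingQuot.liftAlgHom_mkAlgHom_apply, FreeAlgebra.lift_ι_apply]
  rfl

lemma Δmap_d (h : BosHyp k t N p ξ nn) (i : Fin t) :
    Δmap h (dB k t N p ξ i)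
      = dB k t N p ξ i ⊗ₜ 1 + (KB k t N p ξ ^ nn i) ⊗ₜ dB k t N p ξ i := by
  rw [Δmap, dB, RingQuot.liftAlgHom_mkAlgHom_apply, FreeAlgebra.lift_ι_apply]
  rfl

/-- The counit. -/
noncomputable def εmap (hp0 : ∀ i, 0 < p i) : BosAlg k t N p ξ →ₐ[k] k :=
  RingQuot.liftAlgHom k ⟨FreeAlgebra.lift k
    (fun o => Option.elim o (1 : k) (fun _ => (0 : k))), by
      intro x y hxy
      induction hxy with
      | K_pow => simp
      | K_d i => simp
      | d_pow i => simp [zero_pow (hp0 i).ne']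
      | d_comm i j hij => simp⟩

lemma εmap_K (hp0 : ∀ i, 0 < p i) : εmap (k := k) (t := t) (N := N) (p := p) (ξ := ξ) hp0
    (KB k t N p ξ) = 1 := by
  rw [εmap, KB, RingQuot.liftAlgHom_mkAlgHom_apply, FreeAlgebra.lift_ι_apply]
  rfl

lemma εmap_d (hp0 : ∀ i, 0 < p i) (i : Fin t) :
    εmap (k := k) (t := t) (N := N) (p := p) (ξ := ξ) hp0 (dB k t N p ξ i) = 0 := by
  rw [εmap, dB, RingQuot.liftAlgHom_mkAlgHom_apply, FreeAlgebra.lift_ι_apply]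
  rfl

end Maps

end BosAux
namespace BosAux

section Antipode

variable {k : Type*} [Field k] {t N : ℕ} {p : Fin t → ℕ} {ξ : Fin t → k} {nn : Fin t → ℕ}

open MulOpposite

noncomputable def Sgen (k : Type*) [Field k] (t N : ℕ) (p : Fin t → ℕ) (ξ : Fin t → k)
    (nn : Fin t → ℕ) : Option (Fin t) → (BosAlg k t N p ξ)ᵐᵒᵖ
  | none => op (KB k t N p ξ ^ (N - 1))
  | some i => op (-(KB k t N p ξ ^ (N - nn i) * dB k t N p ξ i))

lemma ξ_pow_sub_cross (h : BosHyp k t N p ξ nn) {i j : Fin t} (hij : i ≠ j) :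
    ξ i ^ (N - nn j) = 1 := by
  have h1 : ξ i ^ (N - nn j) * ξ i ^ nn j = 1 := by
    rw [← pow_add, show N - nn j + nn j = N from by have := h.hnn_le j; omega, h.hξN i]
  rwa [h.hcross i j hij, mul_one] at h1

lemma Srel (h : BosHyp k t N p ξ nn) : ∀ ⦃x y : FreeAlgebra k (Option (Fin t))⦄,
    BosRel k t N p ξ x y →
    FreeAlgebra.lift k (Sgen k t N p ξ nn) x = FreeAlgebra.lift k (Sgen k t N p ξ nn) y := by
  intro x y hxy
  induction hxy with
  | K_pow =>
    simp only [map_pow, map_one, FreeAlgebra.lift_ι_apply]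
    show (op (KB k t N p ξ ^ (N - 1))) ^ N = 1
    rw [← op_pow, ← pow_mul, KB_pow_mod ((N - 1) * N), Nat.mul_mod_left, pow_zero, op_one]
  | K_d i =>
    simp only [map_mul, map_smul, FreeAlgebra.lift_ι_apply]
    show op (KB k t N p ξ ^ (N - 1)) * op (-(KB k t N p ξ ^ (N - nn i) * dB k t N p ξ i))
      = ξ i • (op (-(KB k t N p ξ ^ (N - nn i) * dB k t N p ξ i)) * op (KB k t N p ξ ^ (N - 1)))
    rw [← op_mul, ← op_mul, ← op_smul]
    congr 1
    rw [bneg_mul, bmul_neg, bsmul_neg]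
    congr 1
    rw [mul_assoc, dB_mul_KB_pow i (h.hξN i) (by omega),
      show N - (N - 1) = 1 from by have := h.hN; omega, pow_one, mul_smul_comm]
    congr 1
    rw [← mul_assoc, ← mul_assoc, ← pow_add, ← pow_add, Nat.add_comm]
  | d_pow i =>
    simp only [map_pow, map_zero, FreeAlgebra.lift_ι_apply]
    show (op (-(KB k t N p ξ ^ (N - nn i) * dB k t N p ξ i))) ^ p i = 0
    rw [← op_pow, bneg_pow, KB_pow_mul_dB_pow_p, mul_zero, op_zero]
  | d_comm i j hij =>
    simp only [map_mul, FreeAlgebra.lift_ι_apply]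
    show op (-(KB k t N p ξ ^ (N - nn i) * dB k t N p ξ i)) *
        op (-(KB k t N p ξ ^ (N - nn j) * dB k t N p ξ j))
      = op (-(KB k t N p ξ ^ (N - nn j) * dB k t N p ξ j)) *
        op (-(KB k t N p ξ ^ (N - nn i) * dB k t N p ξ i))
    rw [← op_mul, ← op_mul]
    congr 1
    rw [bneg_mul_neg, bneg_mul_neg]
    have hc1 : KB k t N p ξ ^ (N - nn i) * dB k t N p ξ j
        = dB k t N p ξ j * KB k t N p ξ ^ (N - nn i) :=
      KB_pow_mul_dB_comm (ξ_pow_sub_cross h (Ne.symm hij))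
    have hc2 : KB k t N p ξ ^ (N - nn j) * dB k t N p ξ i
        = dB k t N p ξ i * KB k t N p ξ ^ (N - nn j) :=
      KB_pow_mul_dB_comm (ξ_pow_sub_cross h hij)
    calc KB k t N p ξ ^ (N - nn j) * dB k t N p ξ j *
          (KB k t N p ξ ^ (N - nn i) * dB k t N p ξ i)
        = KB k t N p ξ ^ (N - nn j) * (dB k t N p ξ j * KB k t N p ξ ^ (N - nn i)) *
            dB k t N p ξ i := by rw [mul_assoc, mul_assoc, mul_assoc]
      _ = KB k t N p ξ ^ (N - nn j) * (KB k t N p ξ ^ (N - nn i) * dB k t N p ξ j) *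
            dB k t N p ξ i := by rw [hc1]
      _ = (KB k t N p ξ ^ (N - nn j) * KB k t N p ξ ^ (N - nn i)) *
            (dB k t N p ξ j * dB k t N p ξ i) := by
            rw [mul_assoc, mul_assoc, mul_assoc]
      _ = (KB k t N p ξ ^ (N - nn i) * KB k t N p ξ ^ (N - nn j)) *
            (dB k t N p ξ i * dB k t N p ξ j) := by
            rw [← pow_add, ← pow_add, Nat.add_comm, dB_comm hij]
      _ = KB k t N p ξ ^ (N - nn i) * dB k t N p ξ i *
            (KB k t N p ξ ^ (N - nn j) * dB k t N p ξ j) := by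
            rw [mul_assoc, ← mul_assoc (KB k t N p ξ ^ (N - nn j)) (dB k t N p ξ i)
              (dB k t N p ξ j), hc2,
              mul_assoc (dB k t N p ξ i) (KB k t N p ξ ^ (N - nn j)) (dB k t N p ξ j),
              ← mul_assoc]

noncomputable def Smop (h : BosHyp k t N p ξ nn) :
    BosAlg k t N p ξ →ₐ[k] (BosAlg k t N p ξ)ᵐᵒᵖ :=
  RingQuot.liftAlgHom k ⟨FreeAlgebra.lift k (Sgen k t N p ξ nn), Srel h⟩

noncomputable def Smap (h : BosHyp k t N p ξ nn) :
    BosAlg k t N p ξ →ₗ[k] BosAlg k t N p ξ :=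
  (MulOpposite.opLinearEquiv k).symm.toLinearMap ∘ₗ (Smop h).toLinearMap

lemma Smap_apply (h : BosHyp k t N p ξ nn) (x : BosAlg k t N p ξ) :
    Smap h x = unop (Smop h x) := rfl

lemma Smap_K (h : BosHyp k t N p ξ nn) :
    Smap h (KB k t N p ξ) = KB k t N p ξ ^ (N - 1) := by
  rw [Smap_apply, Smop, KB, RingQuot.liftAlgHom_mkAlgHom_apply, FreeAlgebra.lift_ι_apply]
  rfl

lemma Smap_d (h : BosHyp k t N p ξ nn) (i : Fin t) :
    Smap h (dB k t N p ξ i) = -(KB k t N p ξ ^ (N - nn i) * dB k t N p ξ i) := by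
  rw [Smap_apply, Smop, dB, RingQuot.liftAlgHom_mkAlgHom_apply, FreeAlgebra.lift_ι_apply]
  rfl

lemma Smap_anti (h : BosHyp k t N p ξ nn) (x y : BosAlg k t N p ξ) :
    Smap h (x * y) = Smap h y * Smap h x := by
  rw [Smap_apply, map_mul]
  rfl

lemma Smap_one (h : BosHyp k t N p ξ nn) : Smap h 1 = 1 := by
  rw [Smap_apply, map_one]
  rfl

lemma Smap_pow (h : BosHyp k t N p ξ nn) (x : BosAlg k t N p ξ) (s : ℕ) :
    Smap h (x ^ s) = Smap h x ^ s := by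
  rw [Smap_apply, map_pow, MulOpposite.unop_pow, ← Smap_apply]

end Antipode

end BosAux
namespace BosAux

section Axioms

variable {k : Type*} [Field k] {t N : ℕ} {p : Fin t → ℕ} {ξ : Fin t → k} {nn : Fin t → ℕ}

lemma bos_algHom_ext {A : Type*} [Semiring A] [Algebra k A]
    {f g : BosAlg k t N p ξ →ₐ[k] A}
    (hK : f (KB k t N p ξ) = g (KB k t N p ξ))
    (hd : ∀ i, f (dB k t N p ξ i) = g (dB k t N p ξ i)) : f = g := by
  apply RingQuot.ringQuot_ext'
  apply FreeAlgebra.hom_ext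
  funext o
  cases o with
  | none => exact hK
  | some i => exact hd i

lemma Δmap_Kpow (h : BosHyp k t N p ξ nn) (a : ℕ) :
    Δmap h (KB k t N p ξ ^ a) = (KB k t N p ξ ^ a) ⊗ₜ (KB k t N p ξ ^ a) := by
  rw [map_pow, Δmap_K, Algebra.TensorProduct.tmul_pow]

lemma coassoc (h : BosHyp k t N p ξ nn) :
    (Algebra.TensorProduct.assoc k k k (BosAlg k t N p ξ) (BosAlg k t N p ξ)
        (BosAlg k t N p ξ)).toAlgHom.comp
      ((Algebra.TensorProduct.map (Δmap h) (AlgHom.id k (BosAlg k t N p ξ))).comp (Δmap h))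
    = (Algebra.TensorProduct.map (AlgHom.id k (BosAlg k t N p ξ)) (Δmap h)).comp (Δmap h) := by
  apply bos_algHom_ext
  · simp only [AlgHom.coe_comp, Function.comp_apply, AlgEquiv.toAlgHom_eq_coe, AlgEquiv.coe_toAlgHom,
      AlgHom.coe_coe, Δmap_K, Algebra.TensorProduct.map_tmul, AlgHom.coe_id, id_eq,
      Algebra.TensorProduct.assoc_tmul]
  · intro i
    simp only [AlgHom.coe_comp, Function.comp_apply, AlgEquiv.toAlgHom_eq_coe, AlgEquiv.coe_toAlgHom,
      AlgHom.coe_coe, Δmap_d, map_add, Algebra.TensorProduct.map_tmul, AlgHom.coe_id, id_eq,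
      Δmap_Kpow, map_one, Algebra.TensorProduct.assoc_tmul, TensorProduct.tmul_add,
      TensorProduct.add_tmul]
    rw [Algebra.TensorProduct.one_def]
    abel

lemma counit_left (h : BosHyp k t N p ξ nn) (hp0 : ∀ i, 0 < p i) :
    (Algebra.TensorProduct.lid k (BosAlg k t N p ξ)).toAlgHom.comp
      ((Algebra.TensorProduct.map (εmap (k := k) (t := t) (N := N) (p := p) (ξ := ξ) hp0)
        (AlgHom.id k (BosAlg k t N p ξ))).comp (Δmap h))
    = AlgHom.id k (BosAlg k t N p ξ) := by
  apply bos_algHom_ext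
  · simp only [AlgHom.coe_comp, Function.comp_apply, AlgEquiv.toAlgHom_eq_coe, AlgEquiv.coe_toAlgHom,
      AlgHom.coe_coe, Δmap_K, Algebra.TensorProduct.map_tmul, AlgHom.coe_id, id_eq,
      εmap_K, Algebra.TensorProduct.lid_tmul, one_smul]
  · intro i
    simp only [AlgHom.coe_comp, Function.comp_apply, AlgEquiv.toAlgHom_eq_coe, AlgEquiv.coe_toAlgHom,
      AlgHom.coe_coe, Δmap_d, map_add, Algebra.TensorProduct.map_tmul, AlgHom.coe_id, id_eq,
      εmap_d, εmap_K, map_pow, one_pow, map_one, Algebra.TensorProduct.lid_tmul,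
      zero_smul, one_smul, zero_add]

lemma counit_right (h : BosHyp k t N p ξ nn) (hp0 : ∀ i, 0 < p i) :
    (Algebra.TensorProduct.rid k k (BosAlg k t N p ξ)).toAlgHom.comp
      ((Algebra.TensorProduct.map (AlgHom.id k (BosAlg k t N p ξ))
        (εmap (k := k) (t := t) (N := N) (p := p) (ξ := ξ) hp0)).comp (Δmap h))
    = AlgHom.id k (BosAlg k t N p ξ) := by
  apply bos_algHom_ext
  · simp only [AlgHom.coe_comp, Function.comp_apply, AlgEquiv.toAlgHom_eq_coe, AlgEquiv.coe_toAlgHom,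
      AlgHom.coe_coe, Δmap_K, Algebra.TensorProduct.map_tmul, AlgHom.coe_id, id_eq,
      εmap_K, Algebra.TensorProduct.rid_tmul, one_smul]
  · intro i
    simp only [AlgHom.coe_comp, Function.comp_apply, AlgEquiv.toAlgHom_eq_coe, AlgEquiv.coe_toAlgHom,
      AlgHom.coe_coe, Δmap_d, map_add, Algebra.TensorProduct.map_tmul, AlgHom.coe_id, id_eq,
      εmap_d, εmap_K, map_one, Algebra.TensorProduct.rid_tmul,
      zero_smul, one_smul, add_zero]

lemma rid_agree {A : Type*} [Ring A] [Algebra k A] (z : A ⊗[k] k) :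
    (TensorProduct.rid k A) z = (Algebra.TensorProduct.rid k k A) z := by
  induction z using TensorProduct.induction_on with
  | zero => simp
  | tmul a r => simp
  | add x y hx hy => rw [map_add, map_add, hx, hy]

end Axioms

end BosAux
namespace BosAux

section AntipodeAxioms

variable {k : Type*} [Field k] {t N : ℕ} {p : Fin t → ℕ} {ξ : Fin t → k} {nn : Fin t → ℕ}

lemma Smap_algebraMap (h : BosHyp k t N p ξ nn) (r : k) :
    Smap h (algebraMap k (BosAlg k t N p ξ) r) = algebraMap k (BosAlg k t N p ξ) r := by
  rw [Algebra.algebraMap_eq_smul_one, map_smul, Smap_one]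

lemma lemA_left (h : BosHyp k t N p ξ nn) (u : BosAlg k t N p ξ ⊗[k] BosAlg k t N p ξ)
    (c d : BosAlg k t N p ξ) :
    LinearMap.mul' k (BosAlg k t N p ξ)
        (TensorProduct.map (Smap h) LinearMap.id (u * (c ⊗ₜ d)))
      = Smap h c * (LinearMap.mul' k (BosAlg k t N p ξ)
          (TensorProduct.map (Smap h) LinearMap.id u)) * d := by
  induction u using TensorProduct.induction_on with
  | zero => simp
  | tmul a b =>
    rw [Algebra.TensorProduct.tmul_mul_tmul, TensorProduct.map_tmul, TensorProduct.map_tmul,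
      LinearMap.mul'_apply, LinearMap.mul'_apply, Smap_anti, LinearMap.id_apply,
      LinearMap.id_apply]
    rw [mul_assoc, mul_assoc, mul_assoc]
  | add u v hu hv =>
    rw [add_mul, map_add, map_add, map_add, map_add, hu, hv, mul_add, add_mul]

lemma lemA_right (h : BosHyp k t N p ξ nn) (u : BosAlg k t N p ξ ⊗[k] BosAlg k t N p ξ)
    (c d : BosAlg k t N p ξ) :
    LinearMap.mul' k (BosAlg k t N p ξ)
        (TensorProduct.map LinearMap.id (Smap h) ((c ⊗ₜ d) * u))
      = c * (LinearMap.mul' k (BosAlg k t N p ξ)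
          (TensorProduct.map LinearMap.id (Smap h) u)) * Smap h d := by
  induction u using TensorProduct.induction_on with
  | zero => simp
  | tmul a b =>
    rw [Algebra.TensorProduct.tmul_mul_tmul, TensorProduct.map_tmul, TensorProduct.map_tmul,
      LinearMap.mul'_apply, LinearMap.mul'_apply, Smap_anti, LinearMap.id_apply,
      LinearMap.id_apply]
    rw [mul_assoc, mul_assoc, mul_assoc]
  | add u v hu hv =>
    rw [mul_add, map_add, map_add, map_add, map_add, hu, hv, mul_add, add_mul]

lemma lemB_left (h : BosHyp k t N p ξ nn) (hp0 : ∀ i, 0 < p i) (x : BosAlg k t N p ξ)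
    (hx : LinearMap.mul' k (BosAlg k t N p ξ)
        (TensorProduct.map (Smap h) LinearMap.id (Δmap h x))
      = εmap (k := k) (t := t) (N := N) (p := p) (ξ := ξ) hp0 x • 1)
    (v : BosAlg k t N p ξ ⊗[k] BosAlg k t N p ξ) :
    LinearMap.mul' k (BosAlg k t N p ξ)
        (TensorProduct.map (Smap h) LinearMap.id (Δmap h x * v))
      = εmap (k := k) (t := t) (N := N) (p := p) (ξ := ξ) hp0 x •
          LinearMap.mul' k (BosAlg k t N p ξ) (TensorProduct.map (Smap h) LinearMap.id v) := by
  induction v using TensorProduct.induction_on with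
  | zero => simp
  | tmul c d =>
    rw [lemA_left h _ c d, hx, TensorProduct.map_tmul, LinearMap.mul'_apply,
      LinearMap.id_apply, mul_smul_comm, smul_mul_assoc, mul_one]
  | add u v hu hv =>
    rw [mul_add, map_add, map_add, map_add, map_add, hu, hv, smul_add]

lemma lemB_right (h : BosHyp k t N p ξ nn) (hp0 : ∀ i, 0 < p i) (y : BosAlg k t N p ξ)
    (hy : LinearMap.mul' k (BosAlg k t N p ξ)
        (TensorProduct.map LinearMap.id (Smap h) (Δmap h y))
      = εmap (k := k) (t := t) (N := N) (p := p) (ξ := ξ) hp0 y • 1)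
    (v : BosAlg k t N p ξ ⊗[k] BosAlg k t N p ξ) :
    LinearMap.mul' k (BosAlg k t N p ξ)
        (TensorProduct.map LinearMap.id (Smap h) (v * Δmap h y))
      = εmap (k := k) (t := t) (N := N) (p := p) (ξ := ξ) hp0 y •
          LinearMap.mul' k (BosAlg k t N p ξ) (TensorProduct.map LinearMap.id (Smap h) v) := by
  induction v using TensorProduct.induction_on with
  | zero => simp
  | tmul c d =>
    rw [lemA_right h _ c d, hy, TensorProduct.map_tmul, LinearMap.mul'_apply,
      LinearMap.id_apply, mul_smul_comm, smul_mul_assoc, mul_one]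
  | add u v hu hv =>
    rw [add_mul, map_add, map_add, map_add, map_add, hu, hv, smul_add]

lemma Kpow_collapse (h : BosHyp k t N p ξ nn) (i : Fin t) :
    KB k t N p ξ ^ ((N - 1) * nn i) = KB k t N p ξ ^ (N - nn i) := by
  have h1 : (N - 1) * nn i = N * nn i - nn i := by rw [Nat.sub_mul, one_mul]
  have h2 : N * nn i - nn i = (nn i - 1) * N + (N - nn i) := by
    have h3 : (nn i - 1) * N = nn i * N - N := by rw [Nat.sub_mul, one_mul]
    have h4 : N ≤ nn i * N := Nat.le_mul_of_pos_left N (h.hnn_pos i)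
    have h5 : nn i ≤ N := h.hnn_le i
    have h6 : N * nn i = nn i * N := Nat.mul_comm N (nn i)
    omega
  rw [h1, h2, pow_add, pow_mul', KB_pow_N, one_pow, one_mul]

lemma antipode_left (h : BosHyp k t N p ξ nn) (hp0 : ∀ i, 0 < p i) (x : BosAlg k t N p ξ) :
    LinearMap.mul' k (BosAlg k t N p ξ)
        (TensorProduct.map (Smap h) LinearMap.id (Δmap h x))
      = εmap (k := k) (t := t) (N := N) (p := p) (ξ := ξ) hp0 x • 1 := by
  obtain ⟨y, rfl⟩ := RingQuot.mkAlgHom_surjective k (BosRel k t N p ξ) x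
  induction y using FreeAlgebra.induction with
  | grade0 r =>
    rw [AlgHom.commutes, AlgHom.commutes, AlgHom.commutes,
      Algebra.TensorProduct.algebraMap_apply, TensorProduct.map_tmul, LinearMap.mul'_apply,
      Smap_algebraMap, LinearMap.id_apply, mul_one, Algebra.algebraMap_self_apply,
      Algebra.algebraMap_eq_smul_one]
  | grade1 o =>
    cases o with
    | none =>
      rw [show RingQuot.mkAlgHom k (BosRel k t N p ξ) (FreeAlgebra.ι k none) = KB k t N p ξ
          from rfl, Δmap_K, εmap_K, TensorProduct.map_tmul, LinearMap.mul'_apply, Smap_K,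
        LinearMap.id_apply, ← pow_succ, show N - 1 + 1 = N from by have := h.hN; omega,
        KB_pow_N, one_smul]
    | some i =>
      rw [show RingQuot.mkAlgHom k (BosRel k t N p ξ) (FreeAlgebra.ι k (some i))
          = dB k t N p ξ i from rfl, Δmap_d, εmap_d, map_add, map_add,
        TensorProduct.map_tmul, TensorProduct.map_tmul, LinearMap.mul'_apply,
        LinearMap.mul'_apply, Smap_d, Smap_pow, Smap_K, ← pow_mul, Kpow_collapse h i,
        LinearMap.id_apply, LinearMap.id_apply, mul_one, zero_smul]
      exact neg_add_cancel _
  | mul a b ha hb =>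
    rw [map_mul, map_mul (Δmap h), map_mul (εmap hp0), lemB_left h hp0 _ ha, hb, smul_smul]
  | add a b ha hb =>
    simp only [map_add]
    rw [ha, hb, add_smul]

end AntipodeAxioms

end BosAux
namespace BosAux

section AntipodeRight

variable {k : Type*} [Field k] {t N : ℕ} {p : Fin t → ℕ} {ξ : Fin t → k} {nn : Fin t → ℕ}

lemma antipode_right (h : BosHyp k t N p ξ nn) (hp0 : ∀ i, 0 < p i) (x : BosAlg k t N p ξ) :
    LinearMap.mul' k (BosAlg k t N p ξ)
        (TensorProduct.map LinearMap.id (Smap h) (Δmap h x))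
      = εmap (k := k) (t := t) (N := N) (p := p) (ξ := ξ) hp0 x • 1 := by
  obtain ⟨y, rfl⟩ := RingQuot.mkAlgHom_surjective k (BosRel k t N p ξ) x
  induction y using FreeAlgebra.induction with
  | grade0 r =>
    rw [AlgHom.commutes, AlgHom.commutes, AlgHom.commutes,
      Algebra.TensorProduct.algebraMap_apply, TensorProduct.map_tmul, LinearMap.mul'_apply,
      Smap_one, LinearMap.id_apply, mul_one, Algebra.algebraMap_self_apply,
      Algebra.algebraMap_eq_smul_one]
  | grade1 o =>
    cases o with
    | none =>
      rw [show RingQuot.mkAlgHom k (BosRel k t N p ξ) (FreeAlgebra.ι k none) = KB k t N p ξ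
          from rfl, Δmap_K, εmap_K, TensorProduct.map_tmul, LinearMap.mul'_apply, Smap_K,
        LinearMap.id_apply, ← pow_succ', show N - 1 + 1 = N from by have := h.hN; omega,
        KB_pow_N, one_smul]
    | some i =>
      rw [show RingQuot.mkAlgHom k (BosRel k t N p ξ) (FreeAlgebra.ι k (some i))
          = dB k t N p ξ i from rfl, Δmap_d, εmap_d, map_add, map_add,
        TensorProduct.map_tmul, TensorProduct.map_tmul, LinearMap.mul'_apply,
        LinearMap.mul'_apply, Smap_d, Smap_one, LinearMap.id_apply, LinearMap.id_apply,
        mul_one, bmul_neg, ← mul_assoc, ← pow_add,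
        show nn i + (N - nn i) = N from by have := h.hnn_le i; omega, KB_pow_N, one_mul,
        zero_smul]
      exact add_neg_cancel _
  | mul a b ha hb =>
    rw [map_mul, map_mul (Δmap h), map_mul (εmap hp0), lemB_right h hp0 _ hb, ha, smul_smul,
      mul_comm]
  | add a b ha hb =>
    simp only [map_add]
    rw [ha, hb, add_smul]

end AntipodeRight

end BosAux


/-- there exists a Hopf algebra structure on the bosonization `B`
(extending its given `k`-algebra structure: the comultiplication and counit are
`k`-algebra homomorphisms and the antipode is `k`-linear, satisfying the Hopf algebra
axioms), with `Δ(K) = K ⊗ K`, `Δ(d_i) = d_i ⊗ 1 + K^{n_i} ⊗ d_i`, `ε(K) = 1`,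
`ε(d_i) = 0`, `S(K) = K^{N−1}` and `S(d_i) = −K^{N−n_i} d_i`. -/
theorem bosonization_hopfAlgebra
    (k : Type*) [Field k] (t : ℕ) (ht : 1 ≤ t) (p a : Fin t → ℕ)
    (hp : ∀ i, (p i).Prime) (hinj : Function.Injective p) (ha : ∀ i, 1 ≤ a i)
    (n : ℕ) (hn : n = ∏ i, p i ^ a i) (hn2 : 2 ≤ n)
    (m N : ℕ) (hm : m = ∏ i, p i) (hN : N = n ^ 2 / m)
    (q : k) (hq1 : q ^ N = 1) (hq2 : ∀ j : ℕ, 1 ≤ j → j < N → q ^ j ≠ 1)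
    (ξ : Fin t → k) (hξ : ∀ i, ξ i = q ^ (n / p i)) :
    ∃ (Δ : BosAlg k t N p ξ →ₐ[k] BosAlg k t N p ξ ⊗[k] BosAlg k t N p ξ)
      (ε : BosAlg k t N p ξ →ₐ[k] k)
      (S : BosAlg k t N p ξ →ₗ[k] BosAlg k t N p ξ),
      -- coassociativity
      (∀ x : BosAlg k t N p ξ,
        TensorProduct.assoc k (BosAlg k t N p ξ) (BosAlg k t N p ξ) (BosAlg k t N p ξ)
            (Algebra.TensorProduct.map Δ (AlgHom.id k (BosAlg k t N p ξ)) (Δ x))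
          = Algebra.TensorProduct.map (AlgHom.id k (BosAlg k t N p ξ)) Δ (Δ x)) ∧
      -- counit axioms
      (∀ x : BosAlg k t N p ξ,
        TensorProduct.lid k (BosAlg k t N p ξ)
          (Algebra.TensorProduct.map ε (AlgHom.id k (BosAlg k t N p ξ)) (Δ x)) = x) ∧
      (∀ x : BosAlg k t N p ξ,
        TensorProduct.rid k (BosAlg k t N p ξ)
          (Algebra.TensorProduct.map (AlgHom.id k (BosAlg k t N p ξ)) ε (Δ x)) = x) ∧
      -- antipode axioms
      (∀ x : BosAlg k t N p ξ,
        LinearMap.mul' k (BosAlg k t N p ξ)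
          (TensorProduct.map S LinearMap.id (Δ x)) = algebraMap k (BosAlg k t N p ξ) (ε x)) ∧
      (∀ x : BosAlg k t N p ξ,
        LinearMap.mul' k (BosAlg k t N p ξ)
          (TensorProduct.map LinearMap.id S (Δ x)) = algebraMap k (BosAlg k t N p ξ) (ε x)) ∧
      -- values on the generators
      Δ (KB k t N p ξ) = (KB k t N p ξ) ⊗ₜ[k] (KB k t N p ξ) ∧
      (∀ i, Δ (dB k t N p ξ i)
          = (dB k t N p ξ i) ⊗ₜ[k] (1 : BosAlg k t N p ξ)
            + (KB k t N p ξ ^ (n / p i)) ⊗ₜ[k] (dB k t N p ξ i)) ∧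
      ε (KB k t N p ξ) = 1 ∧
      (∀ i, ε (dB k t N p ξ i) = 0) ∧
      S (KB k t N p ξ) = KB k t N p ξ ^ (N - 1) ∧
      (∀ i, S (dB k t N p ξ i) = -(KB k t N p ξ ^ (N - n / p i) * dB k t N p ξ i)) := by
  classical
  have hn0 : 0 < n := by omega
  have hp0 : ∀ i, 0 < p i := fun i => (hp i).pos
  have hpn : ∀ i, p i ∣ n := by
    intro i
    rw [hn]
    exact dvd_trans (dvd_pow_self (p i) (by have := ha i; omega))
      (Finset.dvd_prod_of_mem _ (Finset.mem_univ i))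
  have hnn_mul : ∀ i, n / p i * p i = n := fun i => Nat.div_mul_cancel (hpn i)
  have hmn : m ∣ n := by
    rw [hm, hn]
    exact Finset.prod_dvd_prod_of_dvd _ _
      (fun i _ => dvd_pow_self (p i) (by have := ha i; omega))
  have hm0 : 0 < m := by
    rw [hm]; exact Finset.prod_pos (fun i _ => hp0 i)
  have hNm : N * m = n ^ 2 := by
    rw [hN]
    exact Nat.div_mul_cancel (hmn.trans (dvd_pow_self n two_ne_zero))
  have hN0 : 0 < N := by
    rcases Nat.eq_zero_or_pos N with h0 | h0
    · exfalso
      rw [h0, zero_mul] at hNm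
      have h2 : 0 < n ^ 2 := by positivity
      omega
    · exact h0
  have hmln : m ≤ n := Nat.le_of_dvd hn0 hmn
  have hnN : n ≤ N := by
    have h1 : n * m ≤ N * m := by
      calc n * m ≤ n * n := Nat.mul_le_mul_left n hmln
        _ = n ^ 2 := (sq n).symm
        _ = N * m := hNm.symm
    exact Nat.le_of_mul_le_mul_right h1 hm0
  have hnn_pos : ∀ i, 0 < n / p i :=
    fun i => Nat.div_pos (Nat.le_of_dvd hn0 (hpn i)) (hp0 i)
  have hnn_le : ∀ i, n / p i ≤ N := fun i => le_trans (Nat.div_le_self n (p i)) hnN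
  have hord : ∀ e : ℕ, q ^ e = 1 ↔ N ∣ e := by
    intro e
    constructor
    · intro he
      by_contra hnd
      have h1 : e % N < N := Nat.mod_lt _ hN0
      have h2 : e % N ≠ 0 := fun h0 => hnd (Nat.dvd_of_mod_eq_zero h0)
      apply hq2 (e % N) (by omega) h1
      calc q ^ (e % N) = q ^ (e % N) * (q ^ N) ^ (e / N) := by rw [hq1, one_pow, mul_one]
        _ = q ^ (e % N + N * (e / N)) := by rw [← pow_mul, ← pow_add]
        _ = q ^ e := by rw [Nat.mod_add_div]
        _ = 1 := he
    · rintro ⟨c, rfl⟩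
      rw [pow_mul, hq1, one_pow]
  have hcross_nat : ∀ i j : Fin t, i ≠ j → N ∣ n / p i * (n / p j) := by
    intro i j hij
    have hpp : p i * p j ∣ m := by
      rw [hm, ← Finset.prod_pair hij]
      exact Finset.prod_dvd_prod_of_subset _ _ p (Finset.subset_univ {i, j})
    obtain ⟨r, hr⟩ := hpp
    have key : n / p i * (n / p j) * (p i * p j) = N * r * (p i * p j) := by
      calc n / p i * (n / p j) * (p i * p j) = (n / p i * p i) * (n / p j * p j) := by ring
        _ = n ^ 2 := by rw [hnn_mul, hnn_mul, sq]
        _ = N * m := hNm.symm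
        _ = N * r * (p i * p j) := by rw [hr]; ring
    exact ⟨r, Nat.eq_of_mul_eq_mul_right (Nat.mul_pos (hp0 i) (hp0 j)) key⟩
  have herase : ∀ i : Fin t, m = p i * ∏ l ∈ Finset.univ.erase i, p l := by
    intro i
    rw [hm, ← Finset.mul_prod_erase Finset.univ p (Finset.mem_univ i)]
  have hpow_nat : ∀ i : Fin t, N ∣ n / p i * (n / p i) * p i := by
    intro i
    obtain ⟨s, hs⟩ : ∃ s, m = p i * s := ⟨_, herase i⟩
    have key : n / p i * (n / p i) * p i * p i = N * s * p i := by
      calc n / p i * (n / p i) * p i * p i = (n / p i * p i) * (n / p i * p i) := by ring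
        _ = n ^ 2 := by rw [hnn_mul, sq]
        _ = N * m := hNm.symm
        _ = N * s * p i := by rw [hs]; ring
    exact ⟨s, Nat.eq_of_mul_eq_mul_right (hp0 i) key⟩
  have hps_not : ∀ i : Fin t, ¬ p i ∣ ∏ l ∈ Finset.univ.erase i, p l := by
    intro i hdvd
    obtain ⟨l, hl, hpl⟩ := (Nat.Prime.prime (hp i)).exists_mem_finset_dvd hdvd
    have : p i = p l := (Nat.prime_dvd_prime_iff_eq (hp i) (hp l)).mp hpl
    have : i = l := hinj this
    rw [this] at hl
    exact (Finset.mem_erase.mp hl).1 rfl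
  have hne_nat : ∀ i : Fin t, ∀ j : ℕ, 0 < j → j < p i → ¬ N ∣ n / p i * (n / p i) * j := by
    intro i j hj0 hjp hdvd
    obtain ⟨c, hc⟩ := hdvd
    set s := ∏ l ∈ Finset.univ.erase i, p l with hs_def
    have hs : m = p i * s := herase i
    have key : N * (m * j) = N * (c * (p i * p i)) := by
      calc N * (m * j) = n ^ 2 * j := by rw [← hNm]; ring
        _ = (n / p i * p i) * (n / p i * p i) * j := by rw [hnn_mul, sq]
        _ = (n / p i * (n / p i) * j) * (p i * p i) := by ring
        _ = (N * c) * (p i * p i) := by rw [hc]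
        _ = N * (c * (p i * p i)) := by ring
    have key2 : m * j = c * (p i * p i) := Nat.eq_of_mul_eq_mul_left hN0 key
    have key3 : s * j * p i = c * p i * p i := by
      calc s * j * p i = p i * s * j := by ring
        _ = m * j := by rw [hs]
        _ = c * (p i * p i) := key2
        _ = c * p i * p i := by ring
    have key4 : s * j = c * p i := Nat.eq_of_mul_eq_mul_right (hp0 i) key3
    have hdvd2 : p i ∣ s * j := ⟨c, by rw [key4, Nat.mul_comm]⟩
    rcases (Nat.Prime.dvd_mul (hp i)).mp hdvd2 with hps | hpj
    · exact hps_not i hps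
    · exact absurd (Nat.le_of_dvd hj0 hpj) (by omega)
  -- build the hypothesis bundle
  have hbos : BosAux.BosHyp k t N p ξ (fun i => n / p i) :=
    { hN := hN0
      hnn_pos := hnn_pos
      hnn_le := hnn_le
      hp_pos := hp0
      hξN := fun i => by
        rw [hξ i, ← pow_mul]
        exact (hord _).mpr (dvd_mul_left N (n / p i))
      hω_pow := fun i => by
        rw [hξ i, ← pow_mul, ← pow_mul]
        refine (hord _).mpr ?_
        rw [show n / p i * (n / p i * p i) = n / p i * (n / p i) * p i from by ring]
        exact hpow_nat i
      hω_ne := fun i j hj0 hjp => by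
        rw [hξ i, ← pow_mul, ← pow_mul,
          show n / p i * (n / p i * j) = n / p i * (n / p i) * j from by ring]
        intro heq
        exact hne_nat i j hj0 hjp ((hord _).mp heq)
      hcross := fun i j hij => by
        rw [hξ i, ← pow_mul]
        exact (hord _).mpr (hcross_nat i j hij) }
  refine ⟨BosAux.Δmap hbos, BosAux.εmap (k := k) (t := t) (N := N) (p := p) (ξ := ξ) hp0,
    BosAux.Smap hbos, ?_, ?_, ?_, ?_, ?_, ?_, ?_, ?_, ?_, ?_, ?_⟩
  · intro x
    exact AlgHom.congr_fun (BosAux.coassoc hbos) x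
  · intro x
    exact AlgHom.congr_fun (BosAux.counit_left hbos hp0) x
  · intro x
    rw [BosAux.rid_agree]
    exact AlgHom.congr_fun (BosAux.counit_right hbos hp0) x
  · intro x
    rw [Algebra.algebraMap_eq_smul_one]
    exact BosAux.antipode_left hbos hp0 x
  · intro x
    rw [Algebra.algebraMap_eq_smul_one]
    exact BosAux.antipode_right hbos hp0 x
  · exact BosAux.Δmap_K hbos
  · exact fun i => BosAux.Δmap_d hbos i
  · exact BosAux.εmap_K hp0
  · exact fun i => BosAux.εmap_d hp0 i
  · exact BosAux.Smap_K hbos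
  · exact fun i => BosAux.Smap_d hbos i
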